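/- Let Γ ∈ (1,2], D > 0, m ∈ R^2, E > sqrt(D^2 + ‖m‖^2), and T(p) := p - (Γ-1)·Φ(p) with Φ as above. Then T(0) = (Γ-1)·(E - ‖m‖^2/E - D·sqrt(1 - ‖m‖^2/E^2)) > 0, and consequently if p > 0 then T(p) > 0; so the fixed-point iteration starting from any positive initial value stays positive. -/
import Mathlib

lemma key_pos (D M E q : ℝ) (hD : 0 < D)
    (hE : Real.sqrt (D ^ 2 + M ^ 2) < E) (hq : E ≤ q) :
    0 < E - M ^ 2 / q - D * Real.sqrt (1 - M ^ 2 / q ^ 2) := by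
  have hE0 : 0 < E := lt_of_le_of_lt (Real.sqrt_nonneg _) hE
  have hq0 : 0 < q := lt_of_lt_of_le hE0 hq
  have hE2 : D ^ 2 + M ^ 2 < E ^ 2 := by
    nlinarith [Real.sq_sqrt (by positivity : (0:ℝ) ≤ D ^ 2 + M ^ 2),
      Real.sqrt_nonneg (D ^ 2 + M ^ 2)]
  have hM2 : M ^ 2 < q ^ 2 := by nlinarith
  set s := Real.sqrt (q ^ 2 - M ^ 2) with hs
  have hs2 : s ^ 2 = q ^ 2 - M ^ 2 := Real.sq_sqrt (by linarith)
  have hs0 : 0 ≤ s := Real.sqrt_nonneg _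
  have hrw : Real.sqrt (1 - M ^ 2 / q ^ 2) = s / q := by
    have h : 1 - M ^ 2 / q ^ 2 = (q ^ 2 - M ^ 2) / q ^ 2 := by field_simp
    rw [h, Real.sqrt_div (by linarith), Real.sqrt_sq hq0.le]
  have h1 : 0 < E * q - M ^ 2 := by nlinarith
  have hED : 0 < E ^ 2 - D ^ 2 := by nlinarith [sq_nonneg M]
  have h4 : 0 ≤ M ^ 2 * D ^ 2 * (E ^ 2 - D ^ 2 - M ^ 2) :=
    mul_nonneg (by positivity) (by linarith)
  have h2 : (D * s) ^ 2 < (E * q - M ^ 2) ^ 2 := by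
    have hgoal : D ^ 2 * (q ^ 2 - M ^ 2) < (E * q - M ^ 2) ^ 2 := by
      rw [← sub_pos]
      have hfac : (E ^ 2 - D ^ 2) * ((E * q - M ^ 2) ^ 2 - D ^ 2 * (q ^ 2 - M ^ 2))
          = ((E ^ 2 - D ^ 2) * q - E * M ^ 2) ^ 2
            + M ^ 2 * D ^ 2 * (E ^ 2 - D ^ 2 - M ^ 2) := by ring
      rcases eq_or_ne M 0 with hM | hM
      · rw [hM] at hfac ⊢
        nlinarith [mul_pos hq0 hq0, mul_pos hED (mul_pos hq0 hq0)]
      · have h4' : 0 < M ^ 2 * D ^ 2 * (E ^ 2 - D ^ 2 - M ^ 2) :=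
          mul_pos (by positivity) (by linarith)
        nlinarith [sq_nonneg ((E ^ 2 - D ^ 2) * q - E * M ^ 2), h4', hED]
    calc (D * s) ^ 2 = D ^ 2 * (q ^ 2 - M ^ 2) := by rw [mul_pow, hs2]
      _ < _ := hgoal
  have h3 : D * s < E * q - M ^ 2 := by
    nlinarith [mul_nonneg hD.le hs0]
  rw [hrw]
  have heq : E - M ^ 2 / q - D * (s / q) = (E * q - M ^ 2 - D * s) / q := by
    field_simp
  rw [heq]
  exact div_pos (by linarith) hq0

/-- `T(0) = (Γ-1)(E - ‖m‖²/E - D sqrt (1 - ‖m‖²/E²)) > 0`, and the fixed-point iteration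
`T` maps positive values to positive values. -/
theorem fixed_point_positive
    (Γ D E : ℝ) (m : EuclideanSpace ℝ (Fin 2))
    (hΓ1 : 1 < Γ) (hΓ2 : Γ ≤ 2) (hD : 0 < D)
    (hE : Real.sqrt (D ^ 2 + ‖m‖ ^ 2) < E)
    (Φ T : ℝ → ℝ)
    (hΦ : ∀ p : ℝ, Φ p = p / (Γ - 1) - E + ‖m‖ ^ 2 / (E + p)
      + D * Real.sqrt (1 - ‖m‖ ^ 2 / (E + p) ^ 2))
    (hT : ∀ p : ℝ, T p = p - (Γ - 1) * Φ p) :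
    T 0 = (Γ - 1) * (E - ‖m‖ ^ 2 / E - D * Real.sqrt (1 - ‖m‖ ^ 2 / E ^ 2)) ∧
    0 < T 0 ∧
    (∀ p : ℝ, 0 < p → 0 < T p) := by
  have hΓ0 : Γ - 1 ≠ 0 := by linarith
  have hΓp : 0 < Γ - 1 := by linarith
  have hTgen : ∀ p : ℝ, T p = (Γ - 1) * (E - ‖m‖ ^ 2 / (E + p)
      - D * Real.sqrt (1 - ‖m‖ ^ 2 / (E + p) ^ 2)) := by
    intro p
    rw [hT, hΦ]
    field_simp
    ring
  have hT0 : T 0 = (Γ - 1) * (E - ‖m‖ ^ 2 / E - D * Real.sqrt (1 - ‖m‖ ^ 2 / E ^ 2)) := by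
    rw [hTgen 0]; norm_num
  refine ⟨hT0, ?_, ?_⟩
  · rw [hT0]
    exact mul_pos hΓp (key_pos D ‖m‖ E E hD hE le_rfl)
  · intro p hp
    rw [hTgen p]
    exact mul_pos hΓp (key_pos D ‖m‖ E (E + p) hD hE (by linarith))
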